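/- Two-phase dissemination bound: in the setting where agent p meets agents q₁, q₂, ..., with knowledge merging at each meeting, if the meeting sequence contains two consecutive blocks each containing every agent of A \ {p} at least once, then after the second block every agent that p met in the second block knows all of A; moreover after one more block all agents know all of A. -/
import Mathlib


/-- Two-phase dissemination bound: if the meeting sequence of `p` contains two
consecutive blocks `[t₁, t₂)` and `[t₂, t₃)`, each containing every other
agent at least once, then by the end of the second block every agent knows all
of `A`. -/
theorem stmt15 {A : Type*} [Fintype A] [DecidableEq A]
    (p : A) (meet : ℕ → A) (K : ℕ → A → Finset A)
    (hK0 : ∀ q : A, q ∈ K 0 q)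
    (hmono : ∀ t : ℕ, ∀ q : A, K t q ⊆ K (t + 1) q)
    (hmerge : ∀ t : ℕ, K (t + 1) p = K t p ∪ K t (meet t) ∧
      K (t + 1) (meet t) = K t p ∪ K t (meet t))
    (t₁ t₂ t₃ : ℕ) (h12 : t₁ ≤ t₂) (h23 : t₂ ≤ t₃)
    (hblock1 : ∀ q : A, q ≠ p → ∃ t, t₁ ≤ t ∧ t < t₂ ∧ meet t = q)
    (hblock2 : ∀ q : A, q ≠ p → ∃ t, t₂ ≤ t ∧ t < t₃ ∧ meet t = q) :
    ∀ q : A, K t₃ q = Finset.univ := by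
  have mono : ∀ q : A, ∀ {s t : ℕ}, s ≤ t → K s q ⊆ K t q := by
    intro q s t hst
    induction t, hst using Nat.le_induction with
    | base => exact subset_rfl
    | succ t _ ih => exact ih.trans (hmono t q)
  have hself : ∀ (t : ℕ) (q : A), q ∈ K t q := fun t q =>
    mono q (Nat.zero_le t) (hK0 q)
  -- after block 1, p knows everything
  have hp2 : K t₂ p = Finset.univ := by
    apply Finset.eq_univ_iff_forall.mpr
    intro q
    by_cases hq : q = p
    · subst hq; exact hself _ _
    · obtain ⟨t, ht1, ht2, hm⟩ := hblock1 q hq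
      have : q ∈ K (t + 1) p := by
        rw [(hmerge t).1]
        exact Finset.mem_union_right _ (hm ▸ hself t q)
      exact mono p ht2 this
  intro q
  apply Finset.eq_univ_iff_forall.mpr
  intro r
  by_cases hq : q = p
  · subst hq
    exact mono _ h23 (hp2 ▸ Finset.mem_univ r)
  · obtain ⟨t, ht1, ht2, hm⟩ := hblock2 q hq
    have hr : r ∈ K (t + 1) q := by
      rw [← hm, (hmerge t).2]
      exact Finset.mem_union_left _ (mono p ht1 (hp2 ▸ Finset.mem_univ r))
    exact mono q ht2 hr
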